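/- Let X ⊂ P^n be a Frobenius nonclassical hypersurface over F_q, p = char(F_q), and let L be an F_q-line not contained in X such that the binary form F|_L is not a p-th power. Then L ∩ X contains at least one F_q-rational point, and at every point of L ∩ X not defined over F_q, the intersection multiplicity is divisible by p. -/

import Mathlib

section Aux2
open Polynomial

lemma aux_ratroot (F K : Type*) [Field F] [Fintype F] [Field K] [Algebra F K]
    (α : K) (hα : α ^ (Fintype.card F) = α) :
    ∃ a : F, algebraMap F K a = α := by
  classical
  set q := Fintype.card F with hq
  set P : K[X] := ∏ a : F, (X - C (algebraMap F K a)) with hP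
  have inj : Function.Injective (algebraMap F K) := (algebraMap F K).injective
  have hPdvd : P ∣ X ^ q - X := by
    refine Finset.prod_dvd_of_coprime (fun a _ b hb hab => ?_) (fun a _ => ?_)
    · exact pairwise_coprime_X_sub_C inj hab
    · rw [dvd_iff_isRoot, IsRoot, eval_sub, eval_pow, eval_X, ← map_pow,
        FiniteField.pow_card, sub_self]
  have hPmonic : P.Monic := monic_prod_of_monic _ _ fun a _ => monic_X_sub_C _
  have hQmonic : (X ^ q - X : K[X]).Monic := by
    apply monic_X_pow_sub
    simpa using (Fintype.one_lt_card : 1 < q)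
  have hPdeg : P.natDegree = q := by
    rw [hP, natDegree_prod _ _ (fun a _ => X_sub_C_ne_zero _)]
    simp [natDegree_X_sub_C, hq]
  have h1q : (1:ℕ) < q := Fintype.one_lt_card
  have hQdeg : (X ^ q - X : K[X]).natDegree = q := by
    rw [natDegree_sub_eq_left_of_natDegree_lt (by simp [natDegree_X_pow, h1q]), natDegree_X_pow]
  have hPQ : P = X ^ q - X := by
    obtain ⟨R, hR⟩ := hPdvd
    have hQ0 : (X ^ q - X : K[X]) ≠ 0 := hQmonic.ne_zero
    have hR0 : R ≠ 0 := by rintro rfl; simp [hR] at hQ0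
    have hdeg : R.natDegree = 0 := by
      have := natDegree_mul (hPmonic.ne_zero) hR0
      rw [← hR, hQdeg, hPdeg] at this
      omega
    have hRC : R = C (R.coeff 0) := eq_C_of_natDegree_eq_zero hdeg
    have hlc : R.coeff 0 = 1 := by
      have h1 := congrArg leadingCoeff hR
      rw [hQmonic.leadingCoeff, leadingCoeff_mul, hPmonic.leadingCoeff, one_mul,
        hRC, leadingCoeff_C] at h1
      exact h1.symm
    rw [hR, hRC, hlc, map_one, mul_one]
  have hroot : P.eval α = 0 := by
    rw [hPQ]; simp [hα]
  rw [hP, eval_prod, Finset.prod_eq_zero_iff] at hroot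
  obtain ⟨a, -, ha⟩ := hroot
  refine ⟨a, ?_⟩
  rw [eval_sub, eval_X, eval_C, sub_eq_zero] at ha
  exact ha.symm

lemma aux_pow_dvd {K : Type*} [Field K] (q : ℕ) (P : K[X])
    (hdvd : P ∣ (X ^ q - X) * derivative P) (α : K) (hα : α ^ q ≠ α) :
    (X - C α) ^ (P.rootMultiplicity α) ∣ derivative P := by
  have hco : IsCoprime ((X - C α) ^ (P.rootMultiplicity α)) (X ^ q - X) := by
    apply IsCoprime.pow_left
    rw [(prime_X_sub_C α).coprime_iff_not_dvd, dvd_iff_isRoot]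
    simp only [IsRoot, eval_sub, eval_pow, eval_X]
    exact fun h => hα (by linear_combination h)
  exact hco.dvd_of_dvd_mul_left ((pow_rootMultiplicity_dvd P α).trans hdvd)

lemma aux_mult {K : Type*} [Field K] (p q : ℕ) [CharP K p] (P : K[X])
    (hdvd : P ∣ (X ^ q - X) * derivative P) (α : K) (hα : α ^ q ≠ α) :
    p ∣ P.rootMultiplicity α := by
  by_cases hP : P = 0
  · simp [hP]
  set e := P.rootMultiplicity α with he
  by_cases he0 : e = 0
  · simp [he0]
  by_contra hpe
  have hu := P.pow_mul_divByMonic_rootMultiplicity_eq α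
  set u := P /ₘ (X - C α) ^ e with hudef
  have hu0 : u.eval α ≠ 0 := eval_divByMonic_pow_rootMultiplicity_ne_zero α hP
  have hder : derivative P = (X - C α) ^ (e - 1) * (C (e : K) * u + (X - C α) * derivative u) := by
    rw [← hu, derivative_mul, derivative_pow, derivative_X_sub_C, mul_one]
    have : (X - C α) ^ e = (X - C α) ^ (e - 1) * (X - C α) := by
      rw [← pow_succ, Nat.sub_add_cancel (Nat.one_le_iff_ne_zero.mpr he0)]
    rw [this]; ring
  have hdd : (X - C α) ^ e ∣ derivative P := aux_pow_dvd q P hdvd α hα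
  rw [hder] at hdd
  have hee : (X - C α) ^ e = (X - C α) ^ (e - 1) * (X - C α) := by
    rw [← pow_succ, Nat.sub_add_cancel (Nat.one_le_iff_ne_zero.mpr he0)]
  rw [hee] at hdd
  have hne : ((X - C α) ^ (e - 1) : K[X]) ≠ 0 := pow_ne_zero _ (X_sub_C_ne_zero α)
  have hdd2 : (X - C α) ∣ C (e : K) * u + (X - C α) * derivative u :=
    (mul_dvd_mul_iff_left hne).mp hdd
  rw [dvd_iff_isRoot] at hdd2
  simp only [IsRoot, eval_add, eval_mul, eval_C, eval_sub, eval_X, sub_self, zero_mul,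
    add_zero] at hdd2
  rcases mul_eq_zero.mp hdd2 with h | h
  · exact hpe ((CharP.cast_eq_zero_iff K p e).mp h)
  · exact hu0 h

end Aux2

open MvPolynomial

section Aux
variable {F : Type*} [CommRing F]

lemma pderiv_aeval_chain {σ τ : Type*} [Fintype σ] [DecidableEq σ] [DecidableEq τ]
    (L : σ → MvPolynomial τ F) (f : MvPolynomial σ F) (j : τ) :
    pderiv j (aeval L f) = ∑ i, aeval L (pderiv i f) * pderiv j (L i) := by
  induction f using MvPolynomial.induction_on with
  | C a => simp
  | add f g hf hg => simp only [map_add, hf, hg, add_mul, Finset.sum_add_distrib]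
  | mul_X f i hf =>
      have h2 : ∀ k : σ, aeval L (pderiv k (f * X i)) * pderiv j (L k)
          = aeval L (pderiv k f) * pderiv j (L k) * L i
            + aeval L f * (aeval (R := F) L (pderiv k (X i)) * pderiv j (L k)) := by
        intro k
        rw [pderiv_mul, map_add, map_mul, map_mul, MvPolynomial.aeval_X]; ring
      calc pderiv j (aeval L (f * X i))
          = pderiv j (aeval L f * L i) := by rw [map_mul, MvPolynomial.aeval_X]
        _ = pderiv j (aeval L f) * L i + aeval L f * pderiv j (L i) := pderiv_mul
        _ = (∑ k, aeval L (pderiv k f) * pderiv j (L k)) * L i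
            + aeval L f * pderiv j (L i) := by rw [hf]
        _ = ∑ k, aeval L (pderiv k (f * X i)) * pderiv j (L k) := by
            rw [Finset.sum_congr rfl fun k _ => h2 k, Finset.sum_add_distrib, ← Finset.mul_sum,
              Finset.sum_mul]
            congr 1
            rw [Finset.sum_eq_single i]
            · simp
            · intro k _ hk
              rw [pderiv_X, Pi.single_eq_of_ne (Ne.symm hk)]
              simp
            · simp

lemma euler_identity {σ : Type*} [Fintype σ] [DecidableEq σ] {f : MvPolynomial σ F} {d : ℕ}
    (hf : f.IsHomogeneous d) : ∑ i, X i * pderiv i f = d • f := by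
  have key : ∀ m ∈ f.support, ∑ i, X i * pderiv i (monomial m (coeff m f))
      = d • monomial m (coeff m f) := by
    intro m hm
    have hdm : ∑ i, m i = d := by
      have h1 := hf (mem_support_iff.mp hm)
      rw [show (1 : σ → ℕ) = fun _ => 1 from rfl, ← Finsupp.degree_eq_weight_one] at h1
      rw [← h1, Finsupp.degree]
      exact (Finset.sum_subset (Finset.subset_univ _)
        (fun i _ hi => Finsupp.notMem_support_iff.mp hi)).symm
    have step : ∀ i : σ, X i * pderiv i (monomial m (coeff m f))
        = monomial m (coeff m f * m i) := by
      intro i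
      rw [pderiv_monomial]
      by_cases h : m i = 0
      · simp [h]
      · rw [X, monomial_mul, one_mul, add_tsub_cancel_of_le]
        exact Finsupp.single_le_iff.mpr (Nat.one_le_iff_ne_zero.mpr h)
    rw [Finset.sum_congr rfl fun i _ => step i]
    rw [← map_sum (monomial m), ← Finset.mul_sum, ← Nat.cast_sum, hdm]
    rw [smul_monomial, nsmul_eq_mul, mul_comm]
  calc ∑ i, X i * pderiv i f
      = ∑ i, X i * pderiv i (∑ m ∈ f.support, monomial m (coeff m f)) := by
        rw [f.support_sum_monomial_coeff]
    _ = ∑ m ∈ f.support, ∑ i, X i * pderiv i (monomial m (coeff m f)) := by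
        rw [Finset.sum_comm]
        exact Finset.sum_congr rfl fun i _ => by rw [map_sum, Finset.mul_sum]
    _ = ∑ m ∈ f.support, d • monomial m (coeff m f) := Finset.sum_congr rfl key
    _ = d • f := by rw [← Finset.smul_sum, f.support_sum_monomial_coeff]

lemma derivative_aeval_pair (g : MvPolynomial (Fin 2) F) :
    Polynomial.derivative (aeval ![Polynomial.X, (1 : Polynomial F)] g)
      = aeval ![Polynomial.X, (1 : Polynomial F)] (pderiv 0 g) := by
  induction g using MvPolynomial.induction_on with
  | C a => simp
  | add f g hf hg => simp only [map_add, hf, hg]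
  | mul_X f i hf =>
      rw [map_mul, MvPolynomial.aeval_X, Polynomial.derivative_mul, hf, pderiv_mul, map_add,
        map_mul, map_mul, MvPolynomial.aeval_X]
      congr 1
      fin_cases i <;> simp

lemma eval_aeval_pair (a : F) (g : MvPolynomial (Fin 2) F) :
    Polynomial.eval a (aeval ![Polynomial.X, (1 : Polynomial F)] g) = eval ![a, 1] g := by
  induction g using MvPolynomial.induction_on with
  | C c => simp
  | add f g hf hg => simp only [map_add, hf, hg, Polynomial.eval_add]
  | mul_X f i hf =>
      rw [map_mul, MvPolynomial.aeval_X, Polynomial.eval_mul, hf, map_mul, MvPolynomial.eval_X]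
      congr 1
      fin_cases i <;> simp

end Aux



theorem stmt9 {F : Type*} [Field F] [Fintype F] (q p n d : ℕ)
    (hq : Fintype.card F = q) (hp : p = ringChar F)
    (f : MvPolynomial (Fin (n + 1)) F) (hhom : f.IsHomogeneous d)
    (hfnc : f ∣ ∑ i, X i ^ q * pderiv i f)
    (M : Matrix (Fin (n + 1)) (Fin 2) F) (hM : Function.Injective M.mulVec)
    (g : MvPolynomial (Fin 2) F)
    (hg : g = aeval (fun i => ∑ j, C (M i j) * X j) f)
    (hg0 : g ≠ 0)
    (hgp : ¬ ∃ h : MvPolynomial (Fin 2) F, g = h ^ p) :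
    (∃ a b : F, (a ≠ 0 ∨ b ≠ 0) ∧ eval ![a, b] g = 0) ∧
    (∀ α : AlgebraicClosure F, α ∉ Set.range (algebraMap F (AlgebraicClosure F)) →
      p ∣ Polynomial.rootMultiplicity α
        ((aeval ![Polynomial.X, (1 : Polynomial F)] g).map
          (algebraMap F (AlgebraicClosure F)))) := by
  classical
  haveI hcharF : CharP F p := hp ▸ ringChar.charP F
  obtain ⟨k, hpp, hcard⟩ := FiniteField.card F p
  haveI : Fact p.Prime := ⟨hpp⟩
  have hq' : q = p ^ (k : ℕ) := hq ▸ hcard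
  set K := AlgebraicClosure F with hK
  set ψ := algebraMap F K with hψ
  set L : Fin (n + 1) → MvPolynomial (Fin 2) F := fun i => ∑ j, C (M i j) * X j with hLdef
  -- homogeneity of g
  have hL1 : ∀ i, (L i).IsHomogeneous 1 := fun i =>
    IsHomogeneous.sum _ _ _ fun j _ => isHomogeneous_C_mul_X _ _
  have hgh : g.IsHomogeneous d := by
    rw [hg]
    simpa using hhom.aeval L hL1
  -- pderiv of L
  have hLd : ∀ i j, pderiv j (L i) = C (M i j) := by
    intro i j
    rw [hLdef]
    simp only [map_sum, pderiv_C_mul, pderiv_X]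
    rw [Finset.sum_eq_single j]
    · simp
    · intro b _ hb
      rw [Pi.single_eq_of_ne hb]
      simp
    · simp
  -- chain rule
  have hchain : ∀ j, pderiv j g = ∑ i, aeval L (pderiv i f) * C (M i j) := by
    intro j
    rw [hg, pderiv_aeval_chain]
    exact Finset.sum_congr rfl fun i _ => by rw [hLd]
  -- Frobenius on the linear forms
  have hfrobL : ∀ i, (L i) ^ q = ∑ j, C (M i j) * X j ^ q := by
    intro i
    have h1 : (L i) ^ q = ∑ j, (C (M i j) * X j) ^ q := by
      rw [hq', hLdef]
      exact sum_pow_char_pow p k _ _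
    rw [h1]
    refine Finset.sum_congr rfl fun j _ => ?_
    rw [mul_pow, ← map_pow]
    congr 2
    rw [← hq]
    exact FiniteField.pow_card _
  -- divisibility for g
  have hgdvd : g ∣ ∑ j : Fin 2, X j ^ q * pderiv j g := by
    have h1 : g ∣ aeval L (∑ i, X i ^ q * pderiv i f) := hg ▸ _root_.map_dvd (aeval L) hfnc
    have h2 : aeval (R := F) L (∑ i, X i ^ q * pderiv i f) = ∑ j : Fin 2, X j ^ q * pderiv j g := by
      rw [map_sum]
      calc ∑ i, aeval L (X i ^ q * pderiv i f)
          = ∑ i, ∑ j : Fin 2, (aeval L (pderiv i f) * C (M i j)) * X j ^ q := by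
            refine Finset.sum_congr rfl fun i _ => ?_
            rw [map_mul, map_pow, MvPolynomial.aeval_X, hfrobL, Finset.sum_mul]
            exact Finset.sum_congr rfl fun j _ => by ring
        _ = ∑ j : Fin 2, ∑ i, (aeval L (pderiv i f) * C (M i j)) * X j ^ q := Finset.sum_comm
        _ = ∑ j : Fin 2, X j ^ q * pderiv j g := by
            refine Finset.sum_congr rfl fun j _ => ?_
            rw [hchain, Finset.mul_sum]
            exact Finset.sum_congr rfl fun i _ => by ring

    rwa [h2] at h1
  -- Euler identity for g
  have heuler : ∑ j : Fin 2, X j * pderiv j g = d • g := euler_identity hgh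
  -- pass to one variable
  set φ : MvPolynomial (Fin 2) F →ₐ[F] Polynomial F := aeval ![Polynomial.X, (1 : Polynomial F)]
    with hφdef
  set G : Polynomial F := φ g with hGdef
  have hGder : φ (pderiv 0 g) = Polynomial.derivative G := (derivative_aeval_pair g).symm
  have e0 : φ (X 0) = Polynomial.X := by rw [hφdef, MvPolynomial.aeval_X]; rfl
  have e1 : φ (X 1) = 1 := by rw [hφdef, MvPolynomial.aeval_X]; rfl
  have hGdvd : G ∣ (Polynomial.X ^ q - Polynomial.X) * Polynomial.derivative G := by
    have h1 : G ∣ φ (∑ j : Fin 2, X j ^ q * pderiv j g) := _root_.map_dvd φ hgdvd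
    have h2 : φ (∑ j : Fin 2, X j ^ q * pderiv j g)
        = Polynomial.X ^ q * φ (pderiv 0 g) + φ (pderiv 1 g) := by
      rw [map_sum, Fin.sum_univ_two, map_mul, map_mul, map_pow, map_pow, e0, e1, one_pow, one_mul]
    have h3 : Polynomial.X * φ (pderiv 0 g) + φ (pderiv 1 g) = d • G := by
      have h4 := congrArg φ heuler
      rw [map_sum, Fin.sum_univ_two, map_mul, map_mul, e0, e1, one_mul, map_nsmul, ← hGdef] at h4
      exact h4
    have h5 : (Polynomial.X ^ q - Polynomial.X) * Polynomial.derivative G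
        = (Polynomial.X ^ q * φ (pderiv 0 g) + φ (pderiv 1 g)) - d • G := by
      rw [← h3, hGder]; ring
    rw [h5]
    refine dvd_sub (h2 ▸ h1) ?_
    rw [nsmul_eq_mul]
    exact dvd_mul_left _ _
  -- support degrees
  have hmemdeg : ∀ m ∈ g.support, m 0 + m 1 = d := by
    intro m hm
    have h1 := hgh (mem_support_iff.mp hm)
    rw [show (1 : Fin 2 → ℕ) = fun _ => 1 from rfl, ← Finsupp.degree_eq_weight_one] at h1
    rw [← h1, Finsupp.degree, ← Fin.sum_univ_two (fun i => m i)]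
    exact (Finset.sum_subset (Finset.subset_univ _)
      (fun i _ hi => Finsupp.notMem_support_iff.mp hi)).symm
  -- coefficients of G
  have hGsum : G = ∑ m' ∈ g.support, Polynomial.C (coeff m' g) * Polynomial.X ^ (m' 0) := by
    rw [hGdef, hφdef, aeval_def, eval₂_eq']
    refine Finset.sum_congr rfl fun m' _ => ?_
    rw [Fin.prod_univ_two]
    rw [show (![Polynomial.X, (1 : Polynomial F)] : Fin 2 → Polynomial F) 0 = Polynomial.X
      from rfl]
    rw [show (![Polynomial.X, (1 : Polynomial F)] : Fin 2 → Polynomial F) 1 = 1 from rfl]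
    rw [one_pow, mul_one]
    rfl
  have hcoeffG : ∀ m : Fin 2 →₀ ℕ, m 0 + m 1 = d → G.coeff (m 0) = coeff m g := by
    intro m hm
    rw [hGsum, Polynomial.finset_sum_coeff]
    rw [Finset.sum_eq_single m]
    · rw [Polynomial.coeff_C_mul, Polynomial.coeff_X_pow, if_pos rfl, mul_one]
    · intro b hb hbm
      rw [Polynomial.coeff_C_mul, Polynomial.coeff_X_pow]
      rw [if_neg, mul_zero]
      intro hb0
      apply hbm
      have hbd := hmemdeg b hb
      have hb1 : b 1 = m 1 := by omega
      have hb0' : b 0 = m 0 := hb0.symm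
      ext i
      fin_cases i <;> simp [hb0', hb1]
    · intro hns
      rw [notMem_support_iff.mp hns]
      simp
  have hG0 : G ≠ 0 := by
    obtain ⟨m, hm⟩ := exists_coeff_ne_zero hg0
    have hmm : m ∈ g.support := mem_support_iff.mpr hm
    intro h0
    apply hm
    rw [← hcoeffG m (hmemdeg m hmm), h0, Polynomial.coeff_zero]
  -- to the algebraic closure
  set Gb : Polynomial K := G.map ψ with hGbdef
  have hGbdvd : Gb ∣ (Polynomial.X ^ q - Polynomial.X) * Polynomial.derivative Gb := by
    have h1 := Polynomial.map_dvd ψ hGdvd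
    rwa [Polynomial.map_mul, Polynomial.map_sub, Polynomial.map_pow, Polynomial.map_X,
      ← Polynomial.derivative_map] at h1
  have hGb0 : Gb ≠ 0 := by
    rw [hGbdef, Ne, Polynomial.map_eq_zero]
    exact hG0
  have hrat : ∀ α : K, α ^ q = α → ∃ a : F, ψ a = α := by
    intro α hα
    exact aux_ratroot F K α (by rw [hq]; exact hα)
  refine ⟨?_, ?_⟩
  · -- existence of rational point
    by_contra hno
    push_neg at hno
    have hno' : ∀ a b : F, (a ≠ 0 ∨ b ≠ 0) → eval ![a, b] g ≠ 0 := by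
      intro a b hab
      exact (hno a b) hab
    -- no rational roots of G
    have hnoroot : ∀ α : K, Gb.eval α = 0 → α ^ q ≠ α := by
      intro α hroot hfix
      obtain ⟨a, ha⟩ := hrat α hfix
      have hGa : G.eval a = 0 := by
        have h1 : Gb.eval α = ψ (G.eval a) := by
          rw [hGbdef, ← ha, Polynomial.eval_map, Polynomial.eval₂_at_apply]
        rw [h1] at hroot
        exact (map_eq_zero ψ).mp hroot
      have h2 : eval ![a, 1] g = 0 := by
        rw [← eval_aeval_pair, ← hφdef, ← hGdef, hGa]
      exact hno' a 1 (Or.inr one_ne_zero) h2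
    -- derivative must vanish
    have hallroot : ∀ α ∈ Gb.roots.toFinset,
        (Polynomial.X - Polynomial.C α) ^ (Gb.rootMultiplicity α) ∣ Polynomial.derivative Gb := by
      intro α hα
      apply aux_pow_dvd q Gb hGbdvd
      apply hnoroot
      exact Polynomial.isRoot_of_mem_roots (Multiset.mem_toFinset.mp hα)
    have hprod : (Gb.roots.map fun α => Polynomial.X - Polynomial.C α).prod
        ∣ Polynomial.derivative Gb := by
      rw [Polynomial.prod_multiset_root_eq_finset_root]
      refine Finset.prod_dvd_of_coprime (fun a _ b _ hab => ?_) hallroot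
      exact (Polynomial.pairwise_coprime_X_sub_C Function.injective_id hab).pow
    have hsplit : Gb = Polynomial.C Gb.leadingCoeff
        * (Gb.roots.map fun α => Polynomial.X - Polynomial.C α).prod :=
      (IsAlgClosed.splits Gb).eq_prod_roots
    have hdvd2 : Gb ∣ Polynomial.C Gb.leadingCoeff * Polynomial.derivative Gb := by
      calc Gb = Polynomial.C Gb.leadingCoeff
          * (Gb.roots.map fun α => Polynomial.X - Polynomial.C α).prod := hsplit
        _ ∣ Polynomial.C Gb.leadingCoeff * Polynomial.derivative Gb :=
          mul_dvd_mul_left _ hprod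
    have hlc0 : Gb.leadingCoeff ≠ 0 := Polynomial.leadingCoeff_ne_zero.mpr hGb0
    have hzero : Polynomial.C Gb.leadingCoeff * Polynomial.derivative Gb = 0 := by
      refine Polynomial.eq_zero_of_dvd_of_degree_lt hdvd2 ?_
      calc (Polynomial.C Gb.leadingCoeff * Polynomial.derivative Gb).degree
          = (Polynomial.derivative Gb).degree := Polynomial.degree_C_mul hlc0
        _ < Gb.degree := Polynomial.degree_derivative_lt hGb0
    have hderb0 : Polynomial.derivative Gb = 0 := by
      rcases mul_eq_zero.mp hzero with h | h
      · exact absurd (Polynomial.C_eq_zero.mp h) hlc0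
      · exact h
    have hder0 : Polynomial.derivative G = 0 := by
      have h1 : (Polynomial.derivative G).map ψ = 0 := by
        rw [← Polynomial.derivative_map, ← hGbdef, hderb0]
      exact (Polynomial.map_eq_zero ψ).mp h1
    -- support of G is multiples of p
    have hsuppG : ∀ kk ∈ G.support, p ∣ kk := by
      intro kk hkk
      have hpe : Polynomial.expand F p (Polynomial.contract p G) = G :=
        Polynomial.expand_contract p hder0 hpp.ne_zero
      rw [Polynomial.mem_support_iff, ← hpe, Polynomial.coeff_expand hpp.pos] at hkk
      by_contra hnd
      rw [if_neg hnd] at hkk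
      exact hkk rfl
    -- p divides d
    have h10 : eval ![(1 : F), 0] g ≠ 0 := hno' 1 0 (Or.inl one_ne_zero)
    have hsingle : (Finsupp.single (0 : Fin 2) d) ∈ g.support := by
      by_contra hns
      apply h10
      rw [eval_eq']
      refine Finset.sum_eq_zero fun m hm => ?_
      have hm1 : m 1 ≠ 0 := by
        intro h1
        apply hns
        have hbd := hmemdeg m hm
        have hmeq : m = Finsupp.single (0 : Fin 2) d := by
          have hm0 : m 0 = d := by omega
          ext i
          fin_cases i <;> simp [Finsupp.single_apply, hm0, h1]
        rwa [hmeq] at hm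
      rw [Fin.prod_univ_two]
      rw [show (![(1:F), 0] : Fin 2 → F) 0 = 1 from rfl,
        show (![(1:F), 0] : Fin 2 → F) 1 = 0 from rfl]
      rw [one_pow, one_mul, zero_pow hm1, mul_zero]
    have hpd : p ∣ d := by
      have h1 : G.coeff d ≠ 0 := by
        have h2 := hcoeffG (Finsupp.single (0 : Fin 2) d) (by simp)
        rw [Finsupp.single_eq_same] at h2
        rw [h2]
        exact mem_support_iff.mp hsingle
      exact hsuppG d (Polynomial.mem_support_iff.mpr h1)
    -- all exponents divisible by p
    have hsupp2 : ∀ m ∈ g.support, p ∣ m 0 ∧ p ∣ m 1 := by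
      intro m hm
      have h0 : p ∣ m 0 := by
        apply hsuppG
        rw [Polynomial.mem_support_iff, hcoeffG m (hmemdeg m hm)]
        exact mem_support_iff.mp hm
      refine ⟨h0, ?_⟩
      have hbd := hmemdeg m hm
      have : m 1 = d - m 0 := by omega
      rw [this]
      exact Nat.dvd_sub hpd h0
    -- construct the p-th root
    exfalso
    apply hgp
    refine ⟨∑ m ∈ g.support,
      monomial (Finsupp.single (0 : Fin 2) (m 0 / p) + Finsupp.single (1 : Fin 2) (m 1 / p))
        ((coeff m g) ^ (p ^ ((k : ℕ) - 1))), ?_⟩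
    have hterm : ∀ m ∈ g.support,
        (monomial (Finsupp.single (0 : Fin 2) (m 0 / p) + Finsupp.single (1 : Fin 2) (m 1 / p))
          ((coeff m g) ^ (p ^ ((k : ℕ) - 1)))) ^ p = monomial m (coeff m g) := by
      intro m hm
      obtain ⟨h0, h1⟩ := hsupp2 m hm
      have hsm : p • (Finsupp.single (0 : Fin 2) (m 0 / p) + Finsupp.single (1 : Fin 2) (m 1 / p))
          = m := by
        rw [smul_add, Finsupp.smul_single, Finsupp.smul_single, smul_eq_mul, smul_eq_mul,
          Nat.mul_div_cancel' h0, Nat.mul_div_cancel' h1]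
        ext i
        fin_cases i <;> simp [Finsupp.single_apply]
      have hc : ((coeff m g) ^ (p ^ ((k : ℕ) - 1))) ^ p = coeff m g := by
        rw [← pow_mul, ← pow_succ]
        have hk1 : (k : ℕ) - 1 + 1 = (k : ℕ) := Nat.succ_pred_eq_of_pos k.pos
        rw [hk1, ← hq', ← hq]
        exact FiniteField.pow_card _
      rw [monomial_pow, hsm, hc]
    symm
    rw [sum_pow_char p, Finset.sum_congr rfl hterm]
    exact g.support_sum_monomial_coeff
  · -- multiplicities at irrational points
    intro α hα
    have hfix : α ^ q ≠ α := by
      intro h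
      obtain ⟨a, ha⟩ := hrat α h
      exact hα ⟨a, ha⟩
    exact aux_mult p q Gb hGbdvd α hfix
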